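/- Let C be an abelian category, X ⊆ C closed under direct summands, and T ⊆ C closed under direct summands with T ∩ X ⊆ T^⊥. Then (T∩X)^∨_X ∩ T^⊥ = T ∩ X. -/

import Mathlib

open CategoryTheory CategoryTheory.Limits CategoryTheory.Abelian ZeroObject

universe w v u

namespace RelTilting

variable {C : Type u} [Category.{v} C] [Abelian C]

/-- `f`, `g` form a short exact sequence `0 → A → B → D → 0`. -/
def IsSES {A B D : C} (f : A ⟶ B) (g : B ⟶ D) : Prop :=
  ∃ w : f ≫ g = 0, (ShortComplex.mk f g w).ShortExact

/-- There is a short exact sequence `0 → A → B → D → 0`. -/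
def SES (A B D : C) : Prop := ∃ (f : A ⟶ B) (g : B ⟶ D), IsSES f g

/-- A class of objects is closed under extensions. -/
def ExtClosed (P : C → Prop) : Prop :=
  ∀ ⦃A B D : C⦄, SES A B D → P A → P D → P B

/-- A class of objects is closed under direct summands. -/
def SmdClosed (P : C → Prop) : Prop :=
  ∀ (A V : C), P V → (∃ (i : A ⟶ V) (r : V ⟶ A), i ≫ r = 𝟙 A) → P A

/-- A class of objects is closed under finite (binary) direct sums. -/
def SumClosed (P : C → Prop) : Prop :=
  ∀ (A B : C), P A → P B → P (A ⊞ B)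

/-- A class is closed under CoCones (kernels of epis between its objects). -/
def CoConeClosed (P : C → Prop) : Prop :=
  ∀ ⦃A B D : C⦄, SES A B D → P B → P D → P A

/-- A class is left thick. -/
def LeftThick (P : C → Prop) : Prop :=
  ExtClosed P ∧ SmdClosed P ∧ CoConeClosed P

variable [HasExt.{w} C]

/-- `Ext^i(A,B) = 0` for all `i ≥ 1`. -/
def extVanish (A B : C) : Prop := ∀ i : ℕ, 1 ≤ i → Subsingleton (Ext A B i)

/-- The right orthogonal class `T^⊥`. -/
def rightPerp (T : C → Prop) : C → Prop := fun B => ∀ A, T A → extVanish A B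

/-- The left orthogonal class `^⊥S`. -/
def leftPerp (S : C → Prop) : C → Prop := fun A => ∀ B, S B → extVanish A B

/-- `pd_X(M) ≤ n`. -/
def pdLE (T X : C → Prop) (n : ℕ) : Prop :=
  ∀ M, T M → ∀ X', X X' → ∀ k, n < k → Subsingleton (Ext M X' k)

/-- `M` has a finite coresolution of length `n` with middle terms in `B`
and cokernels in `A`, ending in `A ∩ B`. -/
def CoresLen (B A : C → Prop) : ℕ → C → Prop
  | 0 => fun M => B M ∧ A M
  | (n+1) => fun M => ∃ Y0 N0 : C, B Y0 ∧ A N0 ∧ SES M Y0 N0 ∧ CoresLen B A n N0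

/-- The coresolution dimension of `M` (with middle terms in `B`,
cokernels in `A`) equals `n`. -/
def CoresDimEq (B A : C → Prop) (M : C) (n : ℕ) : Prop :=
  CoresLen B A n M ∧ ∀ m : ℕ, m < n → ¬ CoresLen B A m M

/-- Specification of an infinite coresolution of `M` with middle terms `Yk`
(in `B ∪ {0}`) and cokernels `Nk` (in `A ∪ {0}`). -/
def InfCoresSpec (B A : C → Prop) (M : C) (Yk Nk : ℕ → C) : Prop :=
  (∀ k, B (Yk k) ∨ IsZero (Yk k)) ∧ (∀ k, A (Nk k) ∨ IsZero (Nk k)) ∧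
    SES M (Yk 0) (Nk 0) ∧ ∀ k, SES (Nk k) (Yk (k+1)) (Nk (k+1))

/-- `M` has a (possibly infinite) coresolution with middle terms in `B ∪ {0}`
and cokernels in `A ∪ {0}`. -/
def InfCores (B A : C → Prop) (M : C) : Prop :=
  ∃ Yk Nk : ℕ → C, InfCoresSpec B A M Yk Nk

/-- The class `(A,B)^∨_∞`. -/
def PairVeeInf (A B : C → Prop) (M : C) : Prop := A M ∧ InfCores B A M

/-- `coresdim^A_B(M) ≤ n`, via infinite coresolutions vanishing beyond `n`. -/
def InfCoresDimLE (B A : C → Prop) (M : C) (n : ℕ) : Prop :=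
  ∃ Yk Nk : ℕ → C, InfCoresSpec B A M Yk Nk ∧ ∀ k, n < k → IsZero (Yk k)

/-- The class `T^∨` of objects with a finite coresolution by objects of `T`. -/
def Vee (T : C → Prop) : C → Prop := fun M => ∃ n, CoresLen T (fun _ => True) n M

/-- The class `T^∨_X`. -/
def VeeRel (T X : C → Prop) : C → Prop := fun M => ∃ n, CoresLen T X n M

/-- `ω` is a relative generator in `X`. -/
def RelGen (ω X : C → Prop) : Prop :=
  (∀ W, ω W → X W) ∧ ∀ X0, X X0 → ∃ X' W : C, X X' ∧ ω W ∧ SES X' W X0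

/-- `α` is a relative cogenerator in `X`. -/
def RelCogen (α X : C → Prop) : Prop :=
  (∀ I, α I → X I) ∧ ∀ X0, X X0 → ∃ I X' : C, α I ∧ X X' ∧ SES X0 I X'

/-- `f : T' ⟶ Z` is a `T`-precover of `Z`. -/
def IsPrecover (T : C → Prop) {T' Z : C} (f : T' ⟶ Z) : Prop :=
  T T' ∧ ∀ T'' : C, T T'' → ∀ h : T'' ⟶ Z, ∃ k : T'' ⟶ T', k ≫ f = h

/-- `g : Z ⟶ M` is an `X`-preenvelope of `Z`. -/
def IsPreenvelope (X : C → Prop) {Z M : C} (g : Z ⟶ M) : Prop :=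
  X M ∧ ∀ X' : C, X X' → ∀ h : Z ⟶ X', ∃ k : M ⟶ X', g ≫ k = h

/-- The class `Fac^X_n(T)`. -/
def Fac (T X : C → Prop) : ℕ → C → Prop
  | 0 => fun _ => True
  | (n+1) => fun M => ∃ K T1 : C, X K ∧ (T T1 ∧ X T1) ∧ SES K T1 M ∧ Fac T X n K

/-- `Y` is closed by `n`-quotients in `X`. -/
def ClosedByNQuotients (Y X : C → Prop) (n : ℕ) : Prop :=
  ∀ (K Ymid : ℕ → C), X (K 0) →
    (∀ i, 1 ≤ i → i ≤ n → Y (Ymid i) ∧ X (K i) ∧ SES (K i) (Ymid i) (K (i-1))) →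
    Y (K 0)


/-- A short exact sequence with vanishing `Ext¹(X₃, X₁)` splits: `S.f` admits a retraction. -/
lemma retraction_of_subsingleton_ext {S : ShortComplex C} (hS : S.ShortExact)
    (h : Subsingleton (Ext.{w} S.X₃ S.X₁ 1)) :
    ∃ r : S.X₂ ⟶ S.X₁, S.f ≫ r = 𝟙 S.X₁ := by
  letI := HasDerivedCategory.standard C
  have h0 : (hS.extClass : Ext.{w} S.X₃ S.X₁ 1) = 0 := Subsingleton.elim _ _
  have hδ : hS.singleδ = 0 := by
    rw [← hS.extClass_hom, h0, Ext.zero_hom]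
  obtain ⟨s', hs'⟩ : ∃ s' : (DerivedCategory.singleFunctor C 0).obj S.X₃ ⟶
      (DerivedCategory.singleFunctor C 0).obj S.X₂,
      𝟙 _ = s' ≫ (DerivedCategory.singleFunctor C 0).map S.g :=
    Pretriangulated.Triangle.coyoneda_exact₃ _
    hS.singleTriangle_distinguished (𝟙 hS.singleTriangle.obj₃) (by
      simp [ShortComplex.ShortExact.singleTriangle, hδ]; exact Category.id_comp _)
  -- `s'` is a section of `(singleFunctor C 0).map S.g` in the derived category.
  -- Transport it to `C` using the homology functor.
  let e : DerivedCategory.singleFunctor C 0 ⋙ DerivedCategory.homologyFunctor C 0 ≅ 𝟭 C :=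
    Functor.isoWhiskerRight ((SingleFunctors.evaluation _ _ 0).mapIso
        (DerivedCategory.singleFunctorsPostcompQIso C)) (DerivedCategory.homologyFunctor C 0) ≪≫
      Functor.associator _ _ _ ≪≫
      Functor.isoWhiskerLeft (CochainComplex.singleFunctor C 0)
        (DerivedCategory.homologyFunctorFactors C 0) ≪≫
      HomologicalComplex.homologyFunctorSingleIso C (ComplexShape.up ℤ) 0
  let s : S.X₃ ⟶ S.X₂ :=
    e.inv.app S.X₃ ≫ (DerivedCategory.homologyFunctor C 0).map s' ≫ e.hom.app S.X₂
  have hsg : s ≫ S.g = 𝟙 S.X₃ := by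
    have hnat := e.hom.naturality S.g
    dsimp at hnat
    have hcomp : s' ≫ (DerivedCategory.singleFunctor C 0).map S.g = 𝟙 _ := by
      have := hs'.symm
      simpa [ShortComplex.ShortExact.singleTriangle] using this
    have hmap : (DerivedCategory.homologyFunctor C 0).map s' ≫
        (DerivedCategory.homologyFunctor C 0).map ((DerivedCategory.singleFunctor C 0).map S.g) =
        𝟙 _ := by
      rw [← (DerivedCategory.homologyFunctor C 0).map_comp, hcomp,
        (DerivedCategory.homologyFunctor C 0).map_id]
    show (e.inv.app S.X₃ ≫ (DerivedCategory.homologyFunctor C 0).map s' ≫ e.hom.app S.X₂) ≫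
      S.g = 𝟙 S.X₃
    rw [Category.assoc, Category.assoc, ← hnat,
      ← Category.assoc ((DerivedCategory.homologyFunctor C 0).map s'), hmap,
      Category.id_comp, Iso.inv_hom_id_app]
    rfl
  exact ⟨(ShortComplex.Splitting.ofExactOfSection S hS.exact s hsg hS.mono_f).r,
    (ShortComplex.Splitting.ofExactOfSection S hS.exact s hsg hS.mono_f).f_r⟩

/-- Objects with a finite `(T ∩ X)`-coresolution are left-orthogonal to `T^⊥`. -/
lemma extVanish_of_coresLen {T X : C → Prop} {M : C} (hM : rightPerp T M) :
    ∀ n (N : C), CoresLen (fun A => T A ∧ X A) X n N → extVanish N M := by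
  intro n
  induction n with
  | zero => exact fun N h => hM N h.1.1
  | succ n ih =>
    rintro N ⟨Y0, N0, hY0, -, ⟨f, g, w, hS⟩, hcor⟩
    have hN0 := ih N0 hcor
    intro i hi
    suffices h : ∀ x : Ext N M i, x = 0 by
      exact ⟨fun a b => by rw [h a, h b]⟩
    intro x
    obtain ⟨x₂, hx₂⟩ := Ext.contravariant_sequence_exact₁ hS M x
      (by omega : 1 + i = i + 1) (@Subsingleton.elim _ (hN0 (i+1) (by omega)) _ _)
    have hx₂0 : x₂ = 0 := @Subsingleton.elim _ (hM Y0 hY0.1 i hi) _ _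
    rw [← hx₂, hx₂0, Ext.comp_zero]

theorem stmt9 (X T : C → Prop)
    (hXsmd : SmdClosed X) (hTsmd : SmdClosed T)
    (hT2 : ∀ M, T M → X M → rightPerp T M) :
    ∀ M : C, (VeeRel (fun A => T A ∧ X A) X M ∧ rightPerp T M) ↔ (T M ∧ X M) := by
  intro M
  constructor
  · rintro ⟨⟨n, hcor⟩, hperp⟩
    cases n with
    | zero => exact hcor.1
    | succ n =>
      obtain ⟨Y0, N0, hY0, hN0X, ⟨f, g, w, hS⟩, hcor'⟩ := hcor
      have hsub : Subsingleton (Ext N0 M 1) :=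
        extVanish_of_coresLen hperp n N0 hcor' 1 le_rfl
      obtain ⟨r, hr⟩ := retraction_of_subsingleton_ext hS hsub
      exact ⟨hTsmd M Y0 hY0.1 ⟨f, r, hr⟩, hXsmd M Y0 hY0.2 ⟨f, r, hr⟩⟩
  · rintro ⟨hT, hX⟩
    exact ⟨⟨0, ⟨hT, hX⟩, hX⟩, hT2 M hT hX⟩

end RelTilting
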